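/- Let T be a fixed binary pattern of length m, σ_n the number of binary strings of length n avoiding T (σ_0 = 1), and τ_n as above. Then σ_n = 2^n · ∑_{j=n+1}^∞ τ_j / 2^j for all n ≥ 0. -/

import Mathlib

/-- The pattern `t` (of length `m`) occurs in the string `s` (of length `n`)
at position `i`. -/
def occursAt {m n : ℕ} (t : Fin m → Bool) (s : Fin n → Bool) (i : ℕ) : Prop :=
  ∃ h : i + m ≤ n, ∀ k : Fin m,
    s ⟨i + k, Nat.lt_of_lt_of_le (Nat.add_lt_add_left k.isLt i) h⟩ = t k

/-- `sigmaT t n` is the number of binary strings of length `n` avoiding the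
pattern `t`. -/
noncomputable def sigmaT {m : ℕ} (t : Fin m → Bool) (n : ℕ) : ℕ :=
  Nat.card {s : Fin n → Bool // ∀ i : ℕ, ¬ occursAt t s i}

/-- `tauT t n` is the number of binary strings of length `n` whose final `m`
entries form the pattern `t` and which contain no other occurrence of `t`. -/
noncomputable def tauT {m : ℕ} (t : Fin m → Bool) (n : ℕ) : ℕ :=
  Nat.card {s : Fin n → Bool //
    occursAt t s (n - m) ∧ ∀ i : ℕ, occursAt t s i → i = n - m}

section Aux

variable {m : ℕ} (t : Fin m → Bool)

lemma occursAt_castLE {n n' : ℕ} (h : n ≤ n') (s : Fin n' → Bool) (i : ℕ) :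
    occursAt t (fun k => s (Fin.castLE h k)) i ↔ i + m ≤ n ∧ occursAt t s i := by
  constructor
  · rintro ⟨h1, hk⟩
    exact ⟨h1, le_trans h1 h, fun k => hk k⟩
  · rintro ⟨h1, _, hk⟩
    exact ⟨h1, fun k => hk k⟩

lemma occursAt_init {n : ℕ} (s : Fin (n+1) → Bool) (i : ℕ) :
    occursAt t (Fin.init s) i ↔ i + m ≤ n ∧ occursAt t s i := by
  have : Fin.init s = fun k => s (Fin.castLE n.le_succ k) := rfl
  rw [this, occursAt_castLE]

/-- Strings of length `n+1` whose first `n` characters avoid `t` correspond to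
avoiding strings of length `n` together with a final bit. -/
noncomputable def extEquiv (n : ℕ) :
    {s : Fin (n+1) → Bool // ∀ i, ¬ occursAt t (Fin.init s) i} ≃
      {s : Fin n → Bool // ∀ i, ¬ occursAt t s i} × Bool where
  toFun s := (⟨Fin.init s.1, s.2⟩, s.1 (Fin.last n))
  invFun p := ⟨Fin.snoc p.1.1 p.2, fun i hi => p.1.2 i (by rwa [Fin.init_snoc] at hi)⟩
  left_inv s := Subtype.ext (Fin.snoc_init_self s.1)
  right_inv p := by refine Prod.ext (Subtype.ext ?_) ?_ <;> simp

lemma P_iff (n : ℕ) (s : Fin (n+1) → Bool) :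
    (∀ i, ¬ occursAt t (Fin.init s) i) ↔
      ((∀ i, ¬ occursAt t s i) ∨
        (occursAt t s (n+1-m) ∧ ∀ i, occursAt t s i → i = n+1-m)) := by
  constructor
  · intro hP
    by_cases hQ : ∀ i, ¬ occursAt t s i
    · exact Or.inl hQ
    · push_neg at hQ
      obtain ⟨i, hi⟩ := hQ
      have key : ∀ i', occursAt t s i' → i' = n+1-m := by
        intro i' hi'
        obtain ⟨h1, -⟩ := id hi'
        have h2 := hP i'
        rw [occursAt_init] at h2
        have h3 : ¬ (i' + m ≤ n) := fun h => h2 ⟨h, hi'⟩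
        omega
      refine Or.inr ⟨?_, key⟩
      have := key i hi
      rwa [this] at hi
  · rintro (hQ | ⟨hocc, huniq⟩) i hi
    · rw [occursAt_init] at hi
      exact hQ i hi.2
    · rw [occursAt_init] at hi
      obtain ⟨hle, hocc'⟩ := hi
      have h1 := huniq i hocc'
      obtain ⟨h2, -⟩ := id hocc
      omega

lemma two_sigma (n : ℕ) : 2 * sigmaT t n = sigmaT t (n+1) + tauT t (n+1) := by
  classical
  have h1 : Nat.card {s : Fin (n+1) → Bool // ∀ i, ¬ occursAt t (Fin.init s) i}
      = 2 * sigmaT t n := by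
    rw [Nat.card_congr (extEquiv t n), Nat.card_prod]
    simp [sigmaT, Nat.card_eq_fintype_card, mul_comm]
  rw [← h1]
  have h2 : Nat.card {s : Fin (n+1) → Bool // ∀ i, ¬ occursAt t (Fin.init s) i}
      = Nat.card {s : Fin (n+1) → Bool //
          (∀ i, ¬ occursAt t s i) ∨
            (occursAt t s (n+1-m) ∧ ∀ i, occursAt t s i → i = n+1-m)} :=
    Nat.card_congr (Equiv.subtypeEquivRight (P_iff t n))
  rw [h2]
  have hdisj : Disjoint (fun s : Fin (n+1) → Bool => ∀ i, ¬ occursAt t s i)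
      (fun s => occursAt t s (n+1-m) ∧ ∀ i, occursAt t s i → i = n+1-m) := by
    rw [Pi.disjoint_iff]
    intro s
    rw [Prop.disjoint_iff]
    rintro ⟨hQ, hocc, -⟩
    exact hQ _ hocc
  rw [Nat.card_congr (subtypeOrEquiv _ _ hdisj), Nat.card_sum]
  rfl

lemma sigma_zero (hm : 0 < m) : sigmaT t 0 = 1 := by
  have h : ∀ s : Fin 0 → Bool, ∀ i, ¬ occursAt t s i := by
    rintro s i ⟨h, -⟩; omega
  rw [sigmaT, Nat.card_congr (Equiv.subtypeUnivEquiv fun s => h s)]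
  simp [Nat.card_eq_fintype_card]

lemma card_ne : Nat.card {u : Fin m → Bool // u ≠ t} = 2 ^ m - 1 := by
  classical
  rw [Nat.card_eq_fintype_card]
  have : Fintype.card {u : Fin m → Bool // u ≠ t}
      = Fintype.card (Fin m → Bool) - Fintype.card {u : Fin m → Bool // u = t} := by
    simp [Fintype.card_subtype_compl ((· = t))]
  rw [this]
  simp

lemma sigma_le (n : ℕ) : sigmaT t (n + m) ≤ (2 ^ m - 1) * sigmaT t n := by
  classical
  set f : {s : Fin (n+m) → Bool // ∀ i, ¬ occursAt t s i} →
      {u : Fin m → Bool // u ≠ t} × {s : Fin n → Bool // ∀ i, ¬ occursAt t s i} :=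
    fun s => (⟨fun k => s.1 ⟨n + k, by omega⟩, by
        intro he
        exact s.2 n ⟨le_refl _, fun k => congrFun he k⟩⟩,
      ⟨fun k => s.1 (Fin.castLE (Nat.le_add_right n m) k), by
        intro i hi
        rw [occursAt_castLE] at hi
        exact s.2 i hi.2⟩) with hf
  have hinj : Function.Injective f := by
    intro a b h
    have h1 := congrArg (fun p => (p.1 : Fin m → Bool)) h
    have h2 := congrArg (fun p => (p.2 : Fin n → Bool)) h
    ext x
    rcases lt_or_ge (x : ℕ) n with hx | hx
    · have := congrFun h2 ⟨x, hx⟩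
      simpa [hf] using this
    · have := congrFun h1 ⟨(x : ℕ) - n, by omega⟩
      simp only [hf] at this
      have hx' : (⟨n + ((x : ℕ) - n), by omega⟩ : Fin (n + m)) = x := by
        ext; simp; omega
      rwa [hx'] at this
  calc sigmaT t (n + m) ≤ Nat.card ({u : Fin m → Bool // u ≠ t} ×
      {s : Fin n → Bool // ∀ i, ¬ occursAt t s i}) :=
        Nat.card_le_card_of_injective f hinj
    _ = (2 ^ m - 1) * sigmaT t n := by rw [Nat.card_prod, card_ne]; rfl

lemma sigma_mul_le (hm : 0 < m) (k : ℕ) : sigmaT t (k * m) ≤ (2 ^ m - 1) ^ k := by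
  induction k with
  | zero => simp [sigma_zero t hm]
  | succ k ih =>
      calc sigmaT t ((k+1) * m) = sigmaT t (k * m + m) := by ring_nf
        _ ≤ (2 ^ m - 1) * sigmaT t (k * m) := sigma_le t (k * m)
        _ ≤ (2 ^ m - 1) * (2 ^ m - 1) ^ k := Nat.mul_le_mul_left _ ih
        _ = (2 ^ m - 1) ^ (k + 1) := (pow_succ' _ _).symm

end Aux

/-- `σ_n = 2^n · ∑_{j = n+1}^∞ τ_j / 2^j` for all `n ≥ 0`. -/
theorem sigma_eq_tail_sum {m : ℕ} (hm : 0 < m) (t : Fin m → Bool) (n : ℕ) :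
    (sigmaT t n : ℝ) = 2 ^ n * ∑' j : ℕ, (tauT t (n + 1 + j) : ℝ) / 2 ^ (n + 1 + j) := by
  set a : ℕ → ℝ := fun k => (sigmaT t k : ℝ) / 2 ^ k with ha
  have ha_nonneg : ∀ k, 0 ≤ a k := fun k => by positivity
  have hstep : ∀ k, (tauT t (k + 1) : ℝ) / 2 ^ (k + 1) = a k - a (k + 1) := by
    intro k
    have h := two_sigma t k
    have h' : (2 : ℝ) * sigmaT t k = sigmaT t (k+1) + tauT t (k+1) := by
      exact_mod_cast congrArg (Nat.cast : ℕ → ℝ) h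
    have h2 : (2 : ℝ) ^ (k+1) ≠ 0 := by positivity
    have e : a k - a (k+1) = (2 * (sigmaT t k : ℝ) - sigmaT t (k+1)) / 2 ^ (k+1) := by
      simp only [ha]
      field_simp
      ring
    rw [e, h']
    congr 1
    ring
  have hanti : Antitone a := by
    apply antitone_nat_of_succ_le
    intro k
    have := hstep k
    have ht : (0:ℝ) ≤ (tauT t (k + 1) : ℝ) / 2 ^ (k + 1) := by positivity
    linarith
  -- a tends to 0
  set c : ℝ := (2 ^ m - 1) / 2 ^ m with hc
  have h2m : (1:ℝ) ≤ 2 ^ m := one_le_pow₀ one_le_two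
  have hc0 : 0 ≤ c := by
    apply div_nonneg (by linarith) (by positivity)
  have hc1 : c < 1 := by
    rw [hc, div_lt_one (by positivity)]
    linarith
  have hsub : ∀ k, a (k * m) ≤ c ^ k := by
    intro k
    have h1 := sigma_mul_le t hm k
    have h1' : (sigmaT t (k * m) : ℝ) ≤ ((2 ^ m - 1 : ℕ) : ℝ) ^ k := by
      exact_mod_cast Nat.cast_le.mpr h1
    have hcast : ((2 ^ m - 1 : ℕ) : ℝ) = 2 ^ m - 1 := by
      have : (1:ℕ) ≤ 2 ^ m := Nat.one_le_two_pow
      push_cast [this]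
      ring
    rw [hcast] at h1'
    have : a (k * m) = (sigmaT t (k * m) : ℝ) / 2 ^ (k * m) := rfl
    rw [this]
    rw [div_le_iff₀ (by positivity)]
    calc (sigmaT t (k * m) : ℝ) ≤ (2 ^ m - 1) ^ k := h1'
      _ = c ^ k * 2 ^ (k * m) := by
          rw [hc, div_pow, div_mul_eq_mul_div, eq_div_iff (by positivity)]
          rw [← pow_mul, mul_comm m k]
  have hdiv : Filter.Tendsto (fun N : ℕ => N / m) Filter.atTop Filter.atTop :=
    le_of_eq (Filter.map_div_atTop_eq_nat m hm)
  have hgeo : Filter.Tendsto (fun N : ℕ => c ^ (N / m)) Filter.atTop (nhds 0) :=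
    (tendsto_pow_atTop_nhds_zero_of_lt_one hc0 hc1).comp hdiv
  have ha0 : Filter.Tendsto a Filter.atTop (nhds 0) := by
    apply squeeze_zero ha_nonneg _ hgeo
    intro N
    calc a N ≤ a ((N / m) * m) := hanti (Nat.div_mul_le_self N m)
      _ ≤ c ^ (N / m) := hsub (N / m)
  -- the sum
  have hsum : HasSum (fun j : ℕ => (tauT t (n + 1 + j) : ℝ) / 2 ^ (n + 1 + j)) (a n) := by
    rw [hasSum_iff_tendsto_nat_of_nonneg (fun j => by positivity)]
    have heq : ∀ N, ∑ j ∈ Finset.range N, (tauT t (n + 1 + j) : ℝ) / 2 ^ (n + 1 + j)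
        = a n - a (n + N) := by
      intro N
      have : ∀ j, (tauT t (n + 1 + j) : ℝ) / 2 ^ (n + 1 + j) = a (n + j) - a (n + j + 1) := by
        intro j
        have := hstep (n + j)
        rw [show n + 1 + j = n + j + 1 by ring] at *
        exact this
      simp only [this]
      exact Finset.sum_range_sub' (fun j => a (n + j)) N
    simp only [heq]
    have : Filter.Tendsto (fun N : ℕ => a (n + N)) Filter.atTop (nhds 0) := by
      have h0 := ha0.comp (Filter.tendsto_add_atTop_nat n)
      simpa [Function.comp_def, add_comm] using h0
    simpa using (tendsto_const_nhds.sub this)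
  rw [hsum.tsum_eq]
  simp only [ha]
  rw [mul_comm, div_mul_cancel₀ _ (by positivity : (2:ℝ) ^ n ≠ 0)]
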